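/- Let F be a field, A ∈ M_m(F), B ∈ M_n(F), and let K be an algebraic closure of F. Consider the F-endomorphism ℓ_A − r_B of M_{m,n}(F) given by Y ↦ AY − YB. Then every eigenvalue of ℓ_A − r_B in K is of the form α − β, where α is a root in K of the minimal polynomial of A and β is a root in K of the minimal polynomial of B. -/

import Mathlib

open Polynomial

/-- The endomorphism `Y ↦ A·Y − Y·B` of the space of `m × n` matrices. -/
def sylvesterMap {F : Type*} [Field F] {m n : ℕ}
    (A : Matrix (Fin m) (Fin m) F) (B : Matrix (Fin n) (Fin n) F) :
    Matrix (Fin m) (Fin n) F →ₗ[F] Matrix (Fin m) (Fin n) F where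
  toFun Y := A * Y - Y * B
  map_add' X Y := by simp only [Matrix.mul_add, Matrix.add_mul]; abel
  map_smul' c X := by
    simp only [Matrix.mul_smul, Matrix.smul_mul, RingHom.id_apply, smul_sub]

section Aux

variable {R : Type*} [CommRing R]

lemma aux_stdBasis_repr {m n : Type*} [Fintype m] [Fintype n] [DecidableEq m] [DecidableEq n]
    (M : Matrix m n R) (i : m) (j : n) :
    (Matrix.stdBasis R m n).repr M (i, j) = M i j := by
  simp [Matrix.stdBasis, Pi.basis_repr]

lemma aux_pow_mul {K : Type*} [CommRing K] {m n : Type*} [Fintype m] [Fintype n]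
    [DecidableEq m] [DecidableEq n] (A : Matrix m m K) (C : Matrix n n K) (Y : Matrix m n K)
    (h : A * Y = Y * C) (k : ℕ) :
    A ^ k * Y = Y * C ^ k := by
  induction k with
  | zero => simp
  | succ k ih =>
      calc A ^ (k + 1) * Y = A ^ k * (A * Y) := by rw [pow_succ, Matrix.mul_assoc]
        _ = A ^ k * Y * C := by rw [h, Matrix.mul_assoc]
        _ = Y * C ^ (k + 1) := by rw [ih, Matrix.mul_assoc, ← pow_succ]

lemma aux_aeval_mul {K : Type*} [CommRing K] {m n : Type*} [Fintype m] [Fintype n]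
    [DecidableEq m] [DecidableEq n] (A : Matrix m m K) (C : Matrix n n K) (Y : Matrix m n K)
    (h : A * Y = Y * C) (q : K[X]) :
    (aeval A q) * Y = Y * (aeval C q) := by
  induction q using Polynomial.induction_on' with
  | add p q hp hq => simp [Matrix.add_mul, Matrix.mul_add, hp, hq]
  | monomial k a =>
      simp only [aeval_monomial, Algebra.algebraMap_eq_smul_one, Matrix.smul_mul,
        Matrix.one_mul, Matrix.mul_smul, aux_pow_mul A C Y h k]

lemma aux_pow_mulVec {n : Type*} [Fintype n] [DecidableEq n] (M : Matrix n n R) (v : n → R) (β : R)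
    (hv : M.mulVec v = β • v) (k : ℕ) : (M ^ k).mulVec v = β ^ k • v := by
  induction k with
  | zero => simp
  | succ k ih => rw [pow_succ, ← Matrix.mulVec_mulVec, hv, Matrix.mulVec_smul, ih,
      smul_smul, ← pow_succ']

lemma aux_aeval_mulVec {n : Type*} [Fintype n] [DecidableEq n] (M : Matrix n n R) (v : n → R) (β : R)
    (hv : M.mulVec v = β • v) (q : R[X]) :
    (aeval M q).mulVec v = q.eval β • v := by
  induction q using Polynomial.induction_on' with
  | add p q hp hq => simp [Matrix.add_mulVec, hp, hq, add_smul]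
  | monomial k a =>
      rw [aeval_monomial, eval_monomial, ← Matrix.mulVec_mulVec,
        aux_pow_mulVec M v β hv k, Matrix.mulVec_smul, Algebra.algebraMap_eq_smul_one,
        Matrix.smul_mulVec, Matrix.one_mulVec, smul_smul, mul_comm]

lemma aux_eval_charpoly {n : Type*} [Fintype n] [DecidableEq n] (M : Matrix n n R) (μ : R) :
    M.charpoly.eval μ = (μ • (1 : Matrix n n R) - M).det := by
  rw [Matrix.charpoly, ← Polynomial.coe_evalRingHom, RingHom.map_det]
  congr 1
  ext i j
  by_cases h : i = j <;>
    simp [Matrix.charmatrix_apply, h, Matrix.one_apply, Matrix.smul_apply]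

end Aux

theorem eigenvalues_of_sylvester_map
    (F : Type*) [Field F] (K : Type*) [Field K] [Algebra F K] [IsAlgClosure F K]
    (m n : ℕ) (A : Matrix (Fin m) (Fin m) F) (B : Matrix (Fin n) (Fin n) F)
    (μ : K) (hμ : aeval μ (LinearMap.charpoly (sylvesterMap A B)) = 0) :
    ∃ α β : K, aeval α (minpoly F A) = 0 ∧ aeval β (minpoly F B) = 0 ∧ μ = α - β := by
  classical
  have : IsAlgClosed K := IsAlgClosure.isAlgClosed F
  set φ : F →+* K := algebraMap F K
  set A' : Matrix (Fin m) (Fin m) K := A.map φ with hA'def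
  set B' : Matrix (Fin n) (Fin n) K := B.map φ with hB'def
  set b := Matrix.stdBasis F (Fin m) (Fin n) with hbdef
  set bK := Matrix.stdBasis K (Fin m) (Fin n) with hbKdef
  -- the K-linear Sylvester map is the "base change" of the F-linear one
  have key : ∀ Y : Matrix (Fin m) (Fin n) F,
      sylvesterMap A' B' (Y.map φ) = (sylvesterMap A B Y).map φ := by
    intro Y
    show A' * Y.map φ - Y.map φ * B' = (A * Y - Y * B).map φ
    rw [Matrix.map_sub _ (map_sub φ), Matrix.map_mul, Matrix.map_mul]
  have hE : ∀ (k : Fin m) (l : Fin n),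
      (Matrix.single k l (1 : F)).map φ = Matrix.single k l (1 : K) := by
    intro k l
    ext i j
    simp [Matrix.single, Matrix.map_apply, apply_ite φ]
  have hmat : LinearMap.toMatrix bK bK (sylvesterMap A' B')
      = (LinearMap.toMatrix b b (sylvesterMap A B)).map φ := by
    ext ⟨i, j⟩ ⟨k, l⟩
    rw [Matrix.map_apply, LinearMap.toMatrix_apply, LinearMap.toMatrix_apply, hbdef, hbKdef,
      Matrix.stdBasis_eq_single, Matrix.stdBasis_eq_single, ← hE, key,
      aux_stdBasis_repr, aux_stdBasis_repr, Matrix.map_apply]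
  have h1 : (LinearMap.charpoly (sylvesterMap A B)).map φ
      = LinearMap.charpoly (sylvesterMap A' B') := by
    rw [← LinearMap.charpoly_toMatrix (sylvesterMap A B) b,
      ← LinearMap.charpoly_toMatrix (sylvesterMap A' B') bK, hmat, Matrix.charpoly_map]
  have h2 : (LinearMap.toMatrix bK bK (sylvesterMap A' B')).charpoly.eval μ = 0 := by
    rw [LinearMap.charpoly_toMatrix, ← h1, eval_map, ← aeval_def]
    exact hμ
  rw [aux_eval_charpoly] at h2
  have h3 : LinearMap.det
      (μ • (LinearMap.id : Matrix (Fin m) (Fin n) K →ₗ[K] Matrix (Fin m) (Fin n) K)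
        - sylvesterMap A' B') = 0 := by
    rw [← LinearMap.det_toMatrix bK, map_sub, map_smul, LinearMap.toMatrix_id]
    exact h2
  obtain ⟨Y, hYmem, hY0⟩ := SetLike.exists_of_lt (LinearMap.bot_lt_ker_of_det_eq_zero h3)
  rw [Submodule.mem_bot] at hY0
  have hYker := LinearMap.mem_ker.mp hYmem
  have hYeq : μ • Y - (A' * Y - Y * B') = 0 := by
    simpa [_root_.sylvesterMap] using hYker
  set Cm : Matrix (Fin n) (Fin n) K := B' + μ • (1 : Matrix (Fin n) (Fin n) K) with hCdef
  have hAC : A' * Y = Y * Cm := by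
    have h4 : μ • Y = A' * Y - Y * B' := sub_eq_zero.mp hYeq
    have h5 : A' * Y = Y * B' + μ • Y := by rw [h4]; abel
    rw [hCdef, Matrix.mul_add, Matrix.mul_smul, Matrix.mul_one]
    exact h5
  -- apply the minimal polynomial of A
  set p : F[X] := minpoly F A with hpdef
  set pK : K[X] := p.map φ with hpKdef
  have hAint : IsIntegral F A := IsIntegral.of_finite F A
  have hpmonic : pK.Monic := (minpoly.monic hAint).map φ
  have hp0 : aeval A' pK = 0 := by
    rw [hpKdef, aeval_map_algebraMap,
      show A' = ((Algebra.ofId F K).mapMatrix : Matrix (Fin m) (Fin m) F →ₐ[F]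
        Matrix (Fin m) (Fin m) K) A from rfl, aeval_algHom_apply, minpoly.aeval, map_zero]
  have hYpC : Y * aeval Cm pK = 0 := by
    rw [← aux_aeval_mul A' Cm Y hAC pK, hp0, Matrix.zero_mul]
  have hdet : (aeval Cm pK).det = 0 := by
    by_contra hne
    apply hY0
    have hunit : IsUnit (aeval Cm pK).det := isUnit_iff_ne_zero.mpr hne
    calc Y = Y * aeval Cm pK * (aeval Cm pK)⁻¹ := by
            rw [Matrix.mul_assoc, Matrix.mul_nonsing_inv _ hunit, Matrix.mul_one]
      _ = 0 := by rw [hYpC, Matrix.zero_mul]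
  set l : List K[X] := pK.roots.toList.map fun α => X - C α with hldef
  have hsplit : pK = l.prod := by
    have h6 : pK = (pK.roots.map fun α => X - C α).prod :=
      (IsAlgClosed.splits pK).eq_prod_roots_of_monic hpmonic
    rw [h6, hldef, ← Multiset.prod_coe, ← Multiset.map_coe, Multiset.coe_toList]
  have haeval : aeval Cm pK = (pK.roots.toList.map fun α => Cm - α • 1).prod := by
    conv_lhs => rw [hsplit]
    rw [map_list_prod (aeval Cm : K[X] →ₐ[K] Matrix (Fin n) (Fin n) K) l, hldef,
      List.map_map]
    congr 1
    ext α
    simp [Function.comp, Algebra.algebraMap_eq_smul_one]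
  have hdet2 : (pK.roots.toList.map fun α => (Cm - α • 1).det).prod = 0 := by
    have h7 := congrArg Matrix.det haeval
    rw [hdet, ← Matrix.coe_detMonoidHom, map_list_prod, List.map_map] at h7
    exact h7.symm
  obtain ⟨α, hαmem, hαeq⟩ := List.mem_map.mp (List.prod_eq_zero_iff.mp hdet2)
  refine ⟨α, α - μ, ?_, ?_, by ring⟩
  · have : pK.eval α = 0 := isRoot_of_mem_roots (Multiset.mem_toList.mp hαmem)
    rwa [hpKdef, eval_map, ← aeval_def] at this
  · -- β := α - μ is an eigenvalue of B'
    have hdetB : (B' - (α - μ) • (1 : Matrix (Fin n) (Fin n) K)).det = 0 := by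
      have : B' - (α - μ) • (1 : Matrix (Fin n) (Fin n) K) = Cm - α • 1 := by
        rw [hCdef, sub_smul]
        abel
      rw [this]
      exact hαeq
    obtain ⟨v, hv0, hveq⟩ := Matrix.exists_mulVec_eq_zero_iff.mpr hdetB
    have heig : B'.mulVec v = (α - μ) • v := by
      have := hveq
      rwa [Matrix.sub_mulVec, sub_eq_zero, Matrix.smul_mulVec, Matrix.one_mulVec]
        at this
    set q : F[X] := minpoly F B with hqdef
    set qK : K[X] := q.map φ with hqKdef
    have hq0 : aeval B' qK = 0 := by
      rw [hqKdef, aeval_map_algebraMap,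
        show B' = ((Algebra.ofId F K).mapMatrix : Matrix (Fin n) (Fin n) F →ₐ[F]
          Matrix (Fin n) (Fin n) K) B from rfl, aeval_algHom_apply, minpoly.aeval, map_zero]
    have := aux_aeval_mulVec B' v (α - μ) heig qK
    rw [hq0] at this
    have hz : qK.eval (α - μ) • v = 0 := by
      rw [← this]
      simp
    rcases smul_eq_zero.mp hz with h | h
    · rwa [hqKdef, eval_map, ← aeval_def] at h
    · exact absurd h hv0
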